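/- An edge-labeling of the cycle C_4 on four vertices with values in {1, 2} is good if and only if its edges take alternately the values 1 and 2 in cyclic order (equivalently, any two edges of C_4 sharing a vertex receive distinct labels). -/

import Mathlib

/-- A walk is *increasing* with respect to an edge-labeling if the sequence of labels of its
edges, traversed from the first endpoint to the last, is non-decreasing. -/
def IsIncreasing {V : Type*} (G : SimpleGraph V) (lab : Sym2 V → ℝ) {x y : V}
    (p : G.Walk x y) : Prop :=
  (p.edges.map lab).Chain' (· ≤ ·)

/-- An edge-labeling is *good* if for every ordered pair `(x, y)` of vertices there do not
exist two distinct increasing paths from `x` to `y`. -/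
def IsGoodLabeling {V : Type*} (G : SimpleGraph V) (lab : Sym2 V → ℝ) : Prop :=
  ∀ (x y : V) (p q : G.Walk x y), p.IsPath → q.IsPath →
    IsIncreasing G lab p → IsIncreasing G lab q → p = q

/-- The cycle `C₄` on four vertices, with vertex set `ZMod 4` and edges `{i, i+1}`. -/
def C4 : SimpleGraph (ZMod 4) := SimpleGraph.fromRel (fun i j => j = i + 1)

open SimpleGraph

lemma zfour : (4 : ZMod 4) = 0 := by decide

lemma A11 (x : ZMod 4) : x + 1 + 1 = x + 2 := by ring
lemma A12 (x : ZMod 4) : x + 1 + 2 = x + 3 := by ring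
lemma A13 (x : ZMod 4) : x + 1 + 3 = x := by linear_combination zfour
lemma A21 (x : ZMod 4) : x + 2 + 1 = x + 3 := by ring
lemma A22 (x : ZMod 4) : x + 2 + 2 = x := by linear_combination zfour
lemma A23 (x : ZMod 4) : x + 2 + 3 = x + 1 := by linear_combination zfour
lemma A31 (x : ZMod 4) : x + 3 + 1 = x := by linear_combination zfour
lemma A32 (x : ZMod 4) : x + 3 + 2 = x + 1 := by linear_combination zfour
lemma A33 (x : ZMod 4) : x + 3 + 3 = x + 2 := by linear_combination zfour

lemma ne_add {x : ZMod 4} {b : ZMod 4} (h : b ≠ 0) : x ≠ x + b :=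
  fun hh => h (left_eq_add.mp hh)

lemma add_ne {x : ZMod 4} {a b : ZMod 4} (h : a ≠ b) : x + a ≠ x + b :=
  fun hh => h ((add_right_inj x).mp hh)

lemma mem_start {V : Type*} {G : SimpleGraph V} {a b y : V} (p : G.Walk a y) (h : a = b) :
    b ∈ p.support := by subst h; exact p.start_mem_support

lemma adj_iff {x v : ZMod 4} : C4.Adj x v ↔ x ≠ v ∧ (v = x + 1 ∨ v = x + 3) := by
  rw [C4, SimpleGraph.fromRel_adj]
  refine and_congr_right fun _ => or_congr_right ?_
  constructor
  · rintro rfl; linear_combination -zfour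
  · rintro rfl; linear_combination -zfour

lemma edge_mem (i : ZMod 4) : s(i, i + 1) ∈ C4.edgeSet := by
  rw [SimpleGraph.mem_edgeSet, adj_iff]
  exact ⟨ne_add (by decide), Or.inl rfl⟩

lemma two_path_isPath {a b c : ZMod 4} (h1 : C4.Adj a b) (h2 : C4.Adj b c) (hac : a ≠ c) :
    (Walk.cons h1 (Walk.cons h2 Walk.nil)).IsPath := by
  simp [Walk.cons_isPath_iff, Walk.support_cons, hac, h1.ne, h2.ne]

lemma incr_two (lab : Sym2 (ZMod 4) → ℝ) {a b c : ZMod 4} (h1 : C4.Adj a b) (h2 : C4.Adj b c)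
    (hle : lab s(a, b) ≤ lab s(b, c)) :
    IsIncreasing C4 lab (Walk.cons h1 (Walk.cons h2 Walk.nil)) := by
  simp [IsIncreasing, List.Chain', List.isChain_cons_cons, hle]

lemma classify {x y : ZMod 4} (p : C4.Walk x y) (hp : p.IsPath) :
    (y = x ∧ p.edges = []) ∨
    (y = x + 1 ∧ p.edges = [s(x, x+1)]) ∨
    (y = x + 2 ∧ p.edges = [s(x, x+1), s(x+1, x+2)]) ∨
    (y = x + 3 ∧ p.edges = [s(x, x+1), s(x+1, x+2), s(x+2, x+3)]) ∨
    (y = x + 3 ∧ p.edges = [s(x, x+3)]) ∨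
    (y = x + 2 ∧ p.edges = [s(x, x+3), s(x+3, x+2)]) ∨
    (y = x + 1 ∧ p.edges = [s(x, x+3), s(x+3, x+2), s(x+2, x+1)]) := by
  cases p with
  | nil => exact Or.inl ⟨rfl, rfl⟩
  | @cons _ v _ h1 p1 =>
    rw [Walk.cons_isPath_iff] at hp
    obtain ⟨hp1, hx1⟩ := hp
    obtain ⟨-, rfl | rfl⟩ := adj_iff.mp h1
    · -- first step to x+1
      cases p1 with
      | nil => exact Or.inr (Or.inl ⟨rfl, by simp⟩)
      | @cons _ w _ h2 p2 =>
        rw [Walk.cons_isPath_iff] at hp1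
        obtain ⟨hp2, hx2⟩ := hp1
        obtain ⟨-, rfl | rfl⟩ := adj_iff.mp h2
        · -- at x+1+1 = x+2
          cases p2 with
          | nil =>
            refine Or.inr (Or.inr (Or.inl ⟨by simp only [A11], ?_⟩))
            simp only [Walk.edges_cons, Walk.edges_nil, A11]
          | @cons _ w3 _ h3 p3 =>
            rw [Walk.cons_isPath_iff] at hp2
            obtain ⟨hp3, hx3⟩ := hp2
            obtain ⟨-, rfl | rfl⟩ := adj_iff.mp h3
            · -- at x+1+1+1 = x+3
              cases p3 with
              | nil =>
                refine Or.inr (Or.inr (Or.inr (Or.inl ⟨by simp only [A11, A21], ?_⟩)))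
                simp only [Walk.edges_cons, Walk.edges_nil, A11, A21]
              | @cons _ w4 _ h4 p4 =>
                rw [Walk.cons_isPath_iff] at hp3
                obtain ⟨hp4, hx4⟩ := hp3
                obtain ⟨-, rfl | rfl⟩ := adj_iff.mp h4
                · exfalso; apply hx1
                  simp only [Walk.support_cons, List.mem_cons]
                  refine Or.inr (Or.inr (Or.inr ?_))
                  exact mem_start p4 (by simp only [A11,A12,A13,A21,A22,A23,A31,A32,A33])
                · exfalso; apply hx3
                  simp only [Walk.support_cons, List.mem_cons]
                  refine Or.inr ?_
                  exact mem_start p4 (by simp only [A11,A12,A13,A21,A22,A23,A31,A32,A33])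
            · -- back to x+1+1+3 = x+1
              exfalso; apply hx2
              simp only [Walk.support_cons, List.mem_cons]
              refine Or.inr ?_
              exact mem_start p3 (by simp only [A11,A12,A13,A21,A22,A23,A31,A32,A33])
        · -- back to x+1+3 = x
          exfalso; apply hx1
          simp only [Walk.support_cons, List.mem_cons]
          refine Or.inr ?_
          exact mem_start p2 (by simp only [A11,A12,A13,A21,A22,A23,A31,A32,A33])
    · -- first step to x+3
      cases p1 with
      | nil => exact Or.inr (Or.inr (Or.inr (Or.inr (Or.inl ⟨rfl, by simp⟩))))
      | @cons _ w _ h2 p2 =>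
        rw [Walk.cons_isPath_iff] at hp1
        obtain ⟨hp2, hx2⟩ := hp1
        obtain ⟨-, rfl | rfl⟩ := adj_iff.mp h2
        · -- back to x+3+1 = x
          exfalso; apply hx1
          simp only [Walk.support_cons, List.mem_cons]
          refine Or.inr ?_
          exact mem_start p2 (by simp only [A11,A12,A13,A21,A22,A23,A31,A32,A33])
        · -- at x+3+3 = x+2
          cases p2 with
          | nil =>
            refine Or.inr (Or.inr (Or.inr (Or.inr (Or.inr (Or.inl ⟨by simp only [A33], ?_⟩)))))
            simp only [Walk.edges_cons, Walk.edges_nil, A33]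
          | @cons _ w3 _ h3 p3 =>
            rw [Walk.cons_isPath_iff] at hp2
            obtain ⟨hp3, hx3⟩ := hp2
            obtain ⟨-, rfl | rfl⟩ := adj_iff.mp h3
            · -- back to x+3+3+1 = x+3
              exfalso; apply hx2
              simp only [Walk.support_cons, List.mem_cons]
              refine Or.inr ?_
              exact mem_start p3 (by simp only [A11,A12,A13,A21,A22,A23,A31,A32,A33])
            · -- at x+3+3+3 = x+1
              cases p3 with
              | nil =>
                refine Or.inr (Or.inr (Or.inr (Or.inr (Or.inr (Or.inr
                  ⟨by simp only [A33, A23], ?_⟩)))))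
                simp only [Walk.edges_cons, Walk.edges_nil, A33, A23]
              | @cons _ w4 _ h4 p4 =>
                rw [Walk.cons_isPath_iff] at hp3
                obtain ⟨hp4, hx4⟩ := hp3
                obtain ⟨-, rfl | rfl⟩ := adj_iff.mp h4
                · exfalso; apply hx3
                  simp only [Walk.support_cons, List.mem_cons]
                  refine Or.inr ?_
                  exact mem_start p4 (by simp only [A11,A12,A13,A21,A22,A23,A31,A32,A33])
                · exfalso; apply hx1
                  simp only [Walk.support_cons, List.mem_cons]
                  refine Or.inr (Or.inr (Or.inr ?_))
                  exact mem_start p4 (by simp only [A11,A12,A13,A21,A22,A23,A31,A32,A33])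

/-- An edge-labeling of `C₄` with values in `{1, 2}` is good if and only if its edges take
alternately the values `1` and `2` in cyclic order, i.e., any two edges of `C₄` sharing a
vertex receive distinct labels. -/
theorem c4_good_iff_alternating (lab : Sym2 (ZMod 4) → ℝ)
    (hval : ∀ e ∈ C4.edgeSet, lab e = 1 ∨ lab e = 2) :
    IsGoodLabeling C4 lab ↔ ∀ i : ZMod 4, lab s(i, i + 1) ≠ lab s(i + 1, i + 2) := by
  constructor
  · intro hgood i heq
    have a1 : C4.Adj i (i + 1) := adj_iff.mpr ⟨ne_add (by decide), Or.inl rfl⟩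
    have a2 : C4.Adj (i + 1) (i + 2) :=
      adj_iff.mpr ⟨add_ne (by decide), Or.inl (A11 i).symm⟩
    have a3 : C4.Adj i (i + 3) := adj_iff.mpr ⟨ne_add (by decide), Or.inr rfl⟩
    have a4 : C4.Adj (i + 3) (i + 2) :=
      adj_iff.mpr ⟨add_ne (by decide), Or.inr (A33 i).symm⟩
    have hpq : (Walk.cons a1 (Walk.cons a2 Walk.nil) : C4.Walk i (i + 2)).edges
        = (Walk.cons a3 (Walk.cons a4 Walk.nil) : C4.Walk i (i + 2)).edges ∨
        (Walk.cons a2.symm (Walk.cons a1.symm Walk.nil) : C4.Walk (i + 2) i).edges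
        = (Walk.cons a4.symm (Walk.cons a3.symm Walk.nil) : C4.Walk (i + 2) i).edges := by
      rcases le_total (lab s(i, i + 3)) (lab s(i + 3, i + 2)) with hle | hle
      · left
        refine congrArg _ (hgood i (i + 2) _ _ ?_ ?_ ?_ ?_)
        · exact two_path_isPath a1 a2 (ne_add (by decide))
        · exact two_path_isPath a3 a4 (ne_add (by decide))
        · exact incr_two lab a1 a2 (le_of_eq heq)
        · exact incr_two lab a3 a4 hle
      · right
        refine congrArg _ (hgood (i + 2) i _ _ ?_ ?_ ?_ ?_)
        · exact two_path_isPath a2.symm a1.symm (ne_add (by decide)).symm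
        · exact two_path_isPath a4.symm a3.symm (ne_add (by decide)).symm
        · refine incr_two lab a2.symm a1.symm ?_
          rw [show s(i + 2, i + 1) = s(i + 1, i + 2) from Sym2.eq_swap,
            show s(i + 1, i) = s(i, i + 1) from Sym2.eq_swap]
          exact le_of_eq heq.symm
        · refine incr_two lab a4.symm a3.symm ?_
          rw [show s(i + 2, i + 3) = s(i + 3, i + 2) from Sym2.eq_swap,
            show s(i + 3, i) = s(i, i + 3) from Sym2.eq_swap]
          exact hle
    rcases hpq with h | h <;>
      simp only [Walk.edges_cons, Walk.edges_nil, List.cons.injEq, and_true] at h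
    · rcases Sym2.eq_iff.mp h.1 with ⟨-, h'⟩ | ⟨h', -⟩
      · exact absurd ((add_right_inj i).mp h') (by decide)
      · exact absurd (left_eq_add.mp h') (by decide)
    · rcases Sym2.eq_iff.mp h.1 with ⟨-, h'⟩ | ⟨h', -⟩
      · exact absurd ((add_right_inj i).mp h') (by decide)
      · exact absurd ((add_right_inj i).mp h') (by decide)
  · intro halt x y p q hp hq hip hiq
    have vA : lab s(x, x + 1) = 1 ∨ lab s(x, x + 1) = 2 := hval _ (edge_mem x)
    have vB := hval _ (edge_mem (x + 1)); rw [A11] at vB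
    have vC := hval _ (edge_mem (x + 2)); rw [A21] at vC
    have vD := hval _ (edge_mem (x + 3)); rw [A31] at vD
    have h1 : lab s(x, x + 1) ≠ lab s(x + 1, x + 2) := halt x
    have h2 := halt (x + 1); rw [A11, A12] at h2
    have h3 := halt (x + 2); rw [A21, A22] at h3
    have h4 := halt (x + 3); rw [A31, A32] at h4
    unfold IsIncreasing at hip hiq
    rcases classify p hp with ⟨hy, he⟩|⟨hy, he⟩|⟨hy, he⟩|⟨hy, he⟩|⟨hy, he⟩|⟨hy, he⟩|⟨hy, he⟩ <;>
      subst hy <;>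
      rcases classify q hq with ⟨hy', he'⟩|⟨hy', he'⟩|⟨hy', he'⟩|⟨hy', he'⟩|⟨hy', he'⟩|⟨hy', he'⟩|⟨hy', he'⟩ <;>
    first
      | exact SimpleGraph.Walk.edges_injective (he.trans he'.symm)
      | (exfalso; revert hy'
         simp only [left_eq_add, add_eq_left, add_right_inj]
         decide)
      | (exfalso
         rw [he] at hip; rw [he'] at hiq
         simp only [List.map_cons, List.map_nil, List.Chain', List.isChain_cons_cons, List.isChain_singleton,
           List.isChain_nil, and_true,
           show s(x, x+3) = s(x+3, x) from Sym2.eq_swap,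
           show s(x+3, x+2) = s(x+2, x+3) from Sym2.eq_swap,
           show s(x+2, x+1) = s(x+1, x+2) from Sym2.eq_swap] at hip hiq
         rcases vA with hA | hA <;> rcases vB with hB | hB <;> rcases vC with hC | hC <;>
           rcases vD with hD | hD <;>
           simp only [hA, hB, hC, hD] at * <;> norm_num at *)
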